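/- Let A ∈ M₃⊗M₃ be separable. Then V₁[A] = V₁ ∩ T[A] if and only if P[A] = Q[A]. -/

import Mathlib

open Matrix BigOperators
open scoped ComplexOrder

/-- Index set for `M₃ ⊗ M₃ ≅ M₉`: pairs `(i,k)` with `i,k ∈ Fin 3`. -/
abbrev Idx : Type := Fin 3 × Fin 3

/-- `M₃ ⊗ M₃`, identified with 9×9 complex matrices. -/
abbrev M9 : Type := Matrix Idx Idx ℂ

/-- Vectors in `ℂ³ ⊗ ℂ³ ≅ ℂ⁹`. -/
abbrev V9 : Type := Idx → ℂ

/-- The product vector `x ⊗ y`, with entries `(x⊗y)(i,k) = x i * y k`. -/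
def prodVec (x y : Fin 3 → ℂ) : V9 := fun p => x p.1 * y p.2

/-- Entrywise complex conjugate of a vector in `ℂ³`. -/
def conjVec (x : Fin 3 → ℂ) : Fin 3 → ℂ := fun i => (starRingEnd ℂ) (x i)

/-- The rank-one matrix `z z*`. -/
def rankOne (z : V9) : M9 := Matrix.vecMulVec z (fun p => (starRingEnd ℂ) (z p))

/-- The partial transpose: `A^Γ((i,k),(j,l)) = A((j,k),(i,l))`. -/
def ptrans (A : M9) : M9 := fun p q => A (q.1, p.2) (p.1, q.2)

/-- The range of a matrix `A`, as a subspace of `ℂ⁹`. -/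
noncomputable def MatRange (A : M9) : Submodule ℂ V9 := LinearMap.range A.mulVecLin

/-- `A` is separable: a finite sum of `(x⊗y)(x⊗y)*` over product vectors. -/
def IsSep (A : M9) : Prop :=
  ∃ (n : ℕ) (x y : Fin n → Fin 3 → ℂ),
    A = ∑ ι : Fin n, rankOne (prodVec (x ι) (y ι))

/-- The convex cone `V₁` of all separable matrices. -/
def V1 : Set M9 := {A | IsSep A}

/-- `A` is PPT: both `A` and `A^Γ` are positive semidefinite. -/
def IsPPT (A : M9) : Prop := A.PosSemidef ∧ (ptrans A).PosSemidef

/-- The convex cone `𝕋` of all PPT matrices. -/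
def Tcone : Set M9 := {A | IsPPT A}

/-- `F` is a face of the convex set `C`. -/
def IsFaceOf (F C : Set M9) : Prop :=
  F ⊆ C ∧ Convex ℝ F ∧
    ∀ x ∈ C, ∀ y ∈ C, ∀ t : ℝ, 0 < t → t < 1 →
      (1 - t) • x + t • y ∈ F → x ∈ F ∧ y ∈ F

/-- The smallest face of `C` containing `A`. -/
def smallestFace (C : Set M9) (A : M9) : Set M9 := ⋂₀ {F | IsFaceOf F C ∧ A ∈ F}

/-- `P[A]`: product vectors `z` with `z z* ∈ V₁[A]`. -/
def Pvecs (A : M9) : Set V9 :=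
  {z | (∃ x y : Fin 3 → ℂ, z = prodVec x y) ∧ rankOne z ∈ smallestFace V1 A}

/-- `Q[A]`: product vectors `x⊗y` with `x⊗y ∈ range A` and `x̄⊗y ∈ range A^Γ`. -/
def Qvecs (A : M9) : Set V9 :=
  {z | ∃ x y : Fin 3 → ℂ, z = prodVec x y ∧
    prodVec x y ∈ MatRange A ∧ prodVec (conjVec x) y ∈ MatRange (ptrans A)}

/-- The face `𝕋[A]` of the PPT cone determined by `A`. -/
def TFace (A : M9) : Set M9 :=
  {B | IsPPT B ∧ MatRange B ≤ MatRange A ∧ MatRange (ptrans B) ≤ MatRange (ptrans A)}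

/-- `x` is an interior point of the convex set `C`. -/
def IsInteriorPt (x : M9) (C : Set M9) : Prop :=
  x ∈ C ∧ ∀ y ∈ C, ∃ t : ℝ, 1 < t ∧ (1 - t) • y + t • x ∈ C

/-- The matrix `A[a,b,c]` of the paper. -/
def Amat (a b c : ℝ) : M9 := fun p q =>
  if p = q then
    (if p.1 = p.2 then (a : ℂ) else if p.2 = p.1 + 1 then (c : ℂ) else (b : ℂ))
  else if p.1 = p.2 ∧ q.1 = q.2 then 1 else 0

section Aux
open Matrix

lemma mat_real_smul (a : ℝ) (M : M9) : a • M = (a : ℂ) • M := by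
  ext p q; simp [Complex.real_smul]

lemma vec_real_smul (a : ℝ) (v : V9) : a • v = (a : ℂ) • v := by
  ext p; simp [Complex.real_smul]

lemma rankOne_eq (z : V9) : rankOne z = Matrix.vecMulVec z (star z) := rfl

lemma rankOne_mulVec (z v : V9) : rankOne z *ᵥ v = (star z ⬝ᵥ v) • z := by
  ext p
  simp only [rankOne_eq, Matrix.vecMulVec, Matrix.mulVec, dotProduct,
    Matrix.of_apply, Pi.smul_apply, smul_eq_mul, Finset.sum_mul]
  exact Finset.sum_congr rfl fun q _ => by ring

lemma rankOne_posSemidef (z : V9) : (rankOne z).PosSemidef := by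
  refine Matrix.PosSemidef.of_dotProduct_mulVec_nonneg ?_ ?_
  · ext p q
    simp only [rankOne_eq, Matrix.conjTranspose_apply, Matrix.vecMulVec_apply, Pi.star_apply,
      star_mul', star_star]
    ring
  · intro v
    rw [rankOne_mulVec, dotProduct_smul, Matrix.star_dotProduct, smul_eq_mul]
    exact star_mul_self_nonneg _

lemma ptrans_rankOne (x y : Fin 3 → ℂ) :
    ptrans (rankOne (prodVec x y)) = rankOne (prodVec (conjVec x) y) := by
  ext p q
  simp only [ptrans, rankOne_eq, Matrix.vecMulVec_apply, Pi.star_apply, prodVec, conjVec,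
    star_mul', starRingEnd_apply, star_star]
  ring

lemma ptrans_sum {n : ℕ} (M : Fin n → M9) : ptrans (∑ i, M i) = ∑ i, ptrans (M i) := by
  ext p q
  simp [ptrans, Matrix.sum_apply]

lemma ptrans_add (M N : M9) : ptrans (M + N) = ptrans M + ptrans N := rfl

lemma ptrans_smul_real (a : ℝ) (M : M9) : ptrans (a • M) = a • ptrans M := rfl

lemma sum_mulVec {n : ℕ} (M : Fin n → M9) (v : V9) :
    (∑ i, M i) *ᵥ v = ∑ i, M i *ᵥ v := by
  ext p
  simp only [Matrix.mulVec, dotProduct, Matrix.sum_apply, Finset.sum_apply,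
    Finset.sum_mul]
  exact Finset.sum_comm

lemma dotProduct_finsum {n : ℕ} (u : V9) (w : Fin n → V9) :
    u ⬝ᵥ (∑ i, w i) = ∑ i, u ⬝ᵥ w i := by
  simp only [dotProduct, Finset.sum_apply, Finset.mul_sum]
  exact Finset.sum_comm

lemma psd_sum {n : ℕ} (M : Fin n → M9) (h : ∀ i, (M i).PosSemidef) :
    (∑ i, M i).PosSemidef := by
  classical
  exact Finset.sum_induction M (fun N => N.PosSemidef) (fun a b ha hb => ha.add hb)
    Matrix.PosSemidef.zero (fun i _ => h i)


lemma psd_csmul {c : ℂ} (hc : 0 ≤ c) {M : M9} (h : M.PosSemidef) : (c • M).PosSemidef := by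
  refine Matrix.PosSemidef.of_dotProduct_mulVec_nonneg ?_ ?_
  · rw [Matrix.IsHermitian, Matrix.conjTranspose_smul, h.1.eq,
      (IsSelfAdjoint.of_nonneg hc : star c = c)]
  · intro v
    rw [Matrix.smul_mulVec, dotProduct_smul, smul_eq_mul]
    exact mul_nonneg hc (h.dotProduct_mulVec_nonneg v)

lemma psd_rsmul {a : ℝ} (ha : 0 ≤ a) {M : M9} (h : M.PosSemidef) : (a • M).PosSemidef := by
  rw [mat_real_smul]
  exact psd_csmul (by exact_mod_cast ha) h

lemma sep_posSemidef {A : M9} (hA : IsSep A) : A.PosSemidef := by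
  obtain ⟨n, x, y, rfl⟩ := hA
  exact psd_sum _ fun i => rankOne_posSemidef _

lemma sep_ptrans_posSemidef {A : M9} (hA : IsSep A) : (ptrans A).PosSemidef := by
  obtain ⟨n, x, y, rfl⟩ := hA
  rw [ptrans_sum]
  refine psd_sum _ fun i => ?_
  rw [ptrans_rankOne]
  exact rankOne_posSemidef _

lemma sep_isPPT {A : M9} (hA : IsSep A) : IsPPT A :=
  ⟨sep_posSemidef hA, sep_ptrans_posSemidef hA⟩

/-- If `S`, `X` are Hermitian and `ker S ⊆ ker X`, then `range X ⊆ range S`. -/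
lemma ker_le_range_le {S X : M9} (hS : S.IsHermitian) (hX : X.IsHermitian)
    (h : ∀ v, S *ᵥ v = 0 → X *ᵥ v = 0) : MatRange X ≤ MatRange S := by
  classical
  have hker : LinearMap.ker S.mulVecLin ≤ LinearMap.ker X.mulVecLin := by
    intro v hv
    exact h v hv
  obtain ⟨g0, hg0⟩ := LinearMap.exists_extend
    (((LinearMap.ker S.mulVecLin).liftQ X.mulVecLin hker).comp
      (S.mulVecLin.quotKerEquivRange.symm :
        LinearMap.range S.mulVecLin →ₗ[ℂ] V9 ⧸ LinearMap.ker S.mulVecLin))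
  have key : ∀ v, g0 (S *ᵥ v) = X *ᵥ v := by
    intro v
    have h1 := congrArg (fun f => f ⟨S.mulVecLin v, LinearMap.mem_range_self _ v⟩) hg0
    simp only [LinearMap.comp_apply, Submodule.coe_subtype, LinearEquiv.coe_coe] at h1
    rw [LinearMap.quotKerEquivRange_symm_apply_image, Submodule.mkQ_apply,
      Submodule.liftQ_apply] at h1
    simpa [Matrix.mulVecLin_apply] using h1
  set G : M9 := LinearMap.toMatrix' g0 with hG
  have hGS : X = G * S := by
    apply Matrix.toLin'.injective
    refine LinearMap.ext fun v => ?_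
    show X *ᵥ v = (G * S) *ᵥ v
    rw [← Matrix.mulVec_mulVec, ← key v]
    show g0 (S *ᵥ v) = Matrix.toLin' G (S *ᵥ v)
    rw [hG, Matrix.toLin'_toMatrix']
  have hXS : X = S * Gᴴ := by
    conv_lhs => rw [← hX.eq, hGS, Matrix.conjTranspose_mul, hS.eq]
  rintro _ ⟨u, rfl⟩
  exact ⟨Gᴴ *ᵥ u, by
    simp only [Matrix.mulVecLin_apply]
    rw [Matrix.mulVec_mulVec, ← hXS]⟩


/-- In a convex combination of PSD matrices, the range of each (positively weighted)
summand is contained in the range of the sum. -/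
lemma psd_combo_range {B C : M9} (hB : B.PosSemidef) (hC : C.PosSemidef)
    {s u : ℝ} (hs : 0 < s) (hu : 0 ≤ u) : MatRange B ≤ MatRange (s • B + u • C) := by
  have hD : (s • B + u • C).PosSemidef := (psd_rsmul hs.le hB).add (psd_rsmul hu hC)
  refine ker_le_range_le hD.1 hB.1 fun v hv => ?_
  have h0 : star v ⬝ᵥ ((s • B + u • C) *ᵥ v) = 0 := by rw [hv, dotProduct_zero]
  rw [Matrix.add_mulVec, dotProduct_add, mat_real_smul, mat_real_smul,
    Matrix.smul_mulVec, Matrix.smul_mulVec, dotProduct_smul,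
    dotProduct_smul, smul_eq_mul, smul_eq_mul] at h0
  have hb0 : (s : ℂ) * (star v ⬝ᵥ B *ᵥ v) = 0 := by
    have h1 : 0 ≤ (s : ℂ) * (star v ⬝ᵥ B *ᵥ v) :=
      mul_nonneg (by exact_mod_cast hs.le) (hB.dotProduct_mulVec_nonneg v)
    have h2 : 0 ≤ (u : ℂ) * (star v ⬝ᵥ C *ᵥ v) :=
      mul_nonneg (by exact_mod_cast hu) (hC.dotProduct_mulVec_nonneg v)
    refine le_antisymm ?_ h1
    calc (s : ℂ) * (star v ⬝ᵥ B *ᵥ v)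
        ≤ (s : ℂ) * (star v ⬝ᵥ B *ᵥ v) + (u : ℂ) * (star v ⬝ᵥ C *ᵥ v) :=
          le_add_of_nonneg_right h2
      _ = 0 := h0
  have hsc : (s : ℂ) ≠ 0 := by exact_mod_cast hs.ne'
  have := mul_eq_zero.mp hb0
  rcases this with h | h
  · exact absurd h hsc
  · exact (hB.dotProduct_mulVec_zero_iff v).mp h

/-- The range of each PSD summand is contained in the range of the sum. -/
lemma psd_sum_range {n : ℕ} (M : Fin n → M9) (h : ∀ i, (M i).PosSemidef) (i : Fin n) :
    MatRange (M i) ≤ MatRange (∑ j, M j) := by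
  refine ker_le_range_le (psd_sum M h).1 (h i).1 fun v hv => ?_
  have h0 : star v ⬝ᵥ ((∑ j, M j) *ᵥ v) = 0 := by rw [hv, dotProduct_zero]
  rw [_root_.sum_mulVec, dotProduct_finsum] at h0
  have hz : ∀ j ∈ Finset.univ, star v ⬝ᵥ (M j *ᵥ v) = 0 := by
    rw [← Finset.sum_eq_zero_iff_of_nonneg (fun j _ => (h j).dotProduct_mulVec_nonneg v)]
    exact h0
  exact ((h i).dotProduct_mulVec_zero_iff v).mp (hz i (Finset.mem_univ i))

lemma mem_matRange_rankOne (z : V9) : z ∈ MatRange (rankOne z) := by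
  by_cases hz : z = 0
  · subst hz
    exact Submodule.zero_mem _
  · have hc : star z ⬝ᵥ z ≠ 0 := fun h => hz (dotProduct_star_self_eq_zero.mp h)
    refine ⟨(star z ⬝ᵥ z)⁻¹ • z, ?_⟩
    rw [Matrix.mulVecLin_apply, Matrix.mulVec_smul, rankOne_mulVec, smul_smul,
      inv_mul_cancel₀ hc, one_smul]

lemma matRange_rankOne_le {z : V9} {W : Submodule ℂ V9} (hz : z ∈ W) :
    MatRange (rankOne z) ≤ W := by
  rintro _ ⟨v, rfl⟩
  rw [Matrix.mulVecLin_apply, rankOne_mulVec]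
  exact W.smul_mem _ hz


lemma prodVec_smul (c : ℂ) (x y : Fin 3 → ℂ) : prodVec (c • x) y = c • prodVec x y := by
  ext p
  simp [prodVec, mul_assoc]

lemma rankOne_smul (c : ℂ) (z : V9) : rankOne (c • z) = (c * star c) • rankOne z := by
  ext p q
  simp only [rankOne_eq, Matrix.vecMulVec_apply, Pi.star_apply, Pi.smul_apply, smul_eq_mul,
    Matrix.smul_apply, star_mul']
  ring

lemma V1_zero : (0 : M9) ∈ V1 :=
  ⟨0, fun i => 0, fun i => 0, by simp⟩

lemma V1_smul {a : ℝ} (ha : 0 ≤ a) {A : M9} (hA : A ∈ V1) : a • A ∈ V1 := by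
  obtain ⟨n, x, y, rfl⟩ := hA
  refine ⟨n, fun i => (Real.sqrt a : ℂ) • x i, y, ?_⟩
  rw [Finset.smul_sum]
  refine Finset.sum_congr rfl fun i _ => ?_
  rw [prodVec_smul, rankOne_smul, mat_real_smul]
  congr 1
  rw [Complex.star_def, Complex.conj_ofReal, ← Complex.ofReal_mul,
    Real.mul_self_sqrt ha]

lemma V1_add {A B : M9} (hA : A ∈ V1) (hB : B ∈ V1) : A + B ∈ V1 := by
  obtain ⟨n, x, y, rfl⟩ := hA
  obtain ⟨m, x', y', rfl⟩ := hB
  refine ⟨n + m, Fin.append x x', Fin.append y y', ?_⟩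
  rw [Fin.sum_univ_add]
  congr 1
  · exact Finset.sum_congr rfl fun i _ => by rw [Fin.append_left, Fin.append_left]
  · exact Finset.sum_congr rfl fun i _ => by rw [Fin.append_right, Fin.append_right]

lemma V1_convex : Convex ℝ V1 := fun A hA B hB a b ha hb _ =>
  V1_add (V1_smul ha hA) (V1_smul hb hB)

lemma isFaceOf_V1 : IsFaceOf V1 V1 :=
  ⟨subset_rfl, V1_convex, fun x hx y hy _ _ _ _ => ⟨hx, hy⟩⟩

lemma mem_smallestFace_self (A : M9) : A ∈ smallestFace V1 A :=
  Set.mem_sInter.mpr fun _ hF => hF.2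

lemma smallestFace_subset {A : M9} {F : Set M9} (hF : IsFaceOf F V1) (hAF : A ∈ F) :
    smallestFace V1 A ⊆ F :=
  Set.sInter_subset_of_mem ⟨hF, hAF⟩

lemma smallestFace_isFaceOf {A : M9} (hA : A ∈ V1) : IsFaceOf (smallestFace V1 A) V1 := by
  refine ⟨?_, ?_, ?_⟩
  · intro B hB
    exact Set.mem_sInter.mp hB V1 ⟨isFaceOf_V1, hA⟩
  · exact convex_sInter fun F hF => hF.1.2.1
  · intro x hx y hy t ht1 ht2 hmem
    constructor
    · intro F hF
      exact (hF.1.2.2 x hx y hy t ht1 ht2 (Set.mem_sInter.mp hmem F hF)).1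
    · intro F hF
      exact (hF.1.2.2 x hx y hy t ht1 ht2 (Set.mem_sInter.mp hmem F hF)).2

lemma face_zero_mem {F : Set M9} (hF : IsFaceOf F V1) {B : M9} (hB : B ∈ F) :
    (0 : M9) ∈ F ∧ (2 : ℝ) • B ∈ F := by
  have hBV : B ∈ V1 := hF.1 hB
  have h2 : (2 : ℝ) • B ∈ V1 := V1_smul (by norm_num) hBV
  have hcomb : (1 - (1/2 : ℝ)) • (0 : M9) + (1/2 : ℝ) • ((2 : ℝ) • B) = B := by
    rw [smul_zero, smul_smul]
    norm_num
  exact hF.2.2 0 V1_zero _ h2 (1/2) (by norm_num) (by norm_num) (by rw [hcomb]; exact hB)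

lemma face_add {F : Set M9} (hF : IsFaceOf F V1) {B C : M9} (hB : B ∈ F) (hC : C ∈ F) :
    B + C ∈ F := by
  have hw : (1/2 : ℝ) • B + (1/2 : ℝ) • C ∈ F :=
    hF.2.1 hB hC (by norm_num) (by norm_num) (by norm_num)
  have h2 := (face_zero_mem hF hw).2
  have : (2 : ℝ) • ((1/2 : ℝ) • B + (1/2 : ℝ) • C) = B + C := by
    rw [smul_add, smul_smul, smul_smul]
    norm_num
  rwa [this] at h2

lemma face_sum {F : Set M9} (hF : IsFaceOf F V1) {A0 : M9} (hA0 : A0 ∈ F)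
    {n : ℕ} (M : Fin n → M9) (h : ∀ i, M i ∈ F) : ∑ i, M i ∈ F :=
  Finset.sum_induction M (· ∈ F) (fun _ _ ha hb => face_add hF ha hb)
    ((face_zero_mem hF hA0).1) (fun i _ => h i)


lemma matRange_combo_le (a b : ℝ) (B C : M9) {W : Submodule ℂ V9}
    (hB : MatRange B ≤ W) (hC : MatRange C ≤ W) : MatRange (a • B + b • C) ≤ W := by
  rintro _ ⟨w, rfl⟩
  rw [Matrix.mulVecLin_apply, Matrix.add_mulVec, mat_real_smul, mat_real_smul,
    Matrix.smul_mulVec, Matrix.smul_mulVec]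
  exact Submodule.add_mem W (W.smul_mem _ (hB ⟨w, rfl⟩)) (W.smul_mem _ (hC ⟨w, rfl⟩))

lemma isFaceOf_inter_TFace {A : M9} (hA : IsSep A) : IsFaceOf (V1 ∩ TFace A) V1 := by
  refine ⟨Set.inter_subset_left, ?_, ?_⟩
  · intro B hB C hC a b ha hb hab
    refine ⟨V1_convex hB.1 hC.1 ha hb hab,
      ⟨(psd_rsmul ha (sep_posSemidef hB.1)).add (psd_rsmul hb (sep_posSemidef hC.1)), ?_⟩,
      matRange_combo_le a b B C hB.2.2.1 hC.2.2.1, ?_⟩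
    · rw [ptrans_add, ptrans_smul_real, ptrans_smul_real]
      exact (psd_rsmul ha (sep_ptrans_posSemidef hB.1)).add
        (psd_rsmul hb (sep_ptrans_posSemidef hC.1))
    · rw [ptrans_add, ptrans_smul_real, ptrans_smul_real]
      exact matRange_combo_le a b _ _ hB.2.2.2 hC.2.2.2
  · intro x hx y hy t ht1 ht2 hmem
    obtain ⟨hmV1, hmPPT, hr, hrt⟩ := hmem
    have h1t : (0 : ℝ) < 1 - t := by linarith
    have hxr : MatRange x ≤ MatRange A :=
      le_trans (psd_combo_range (sep_posSemidef hx) (sep_posSemidef hy) h1t ht1.le) hr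
    have hyr : MatRange y ≤ MatRange A := by
      refine le_trans (le_trans
        (psd_combo_range (sep_posSemidef hy) (sep_posSemidef hx) ht1 h1t.le) (le_of_eq ?_)) hr
      rw [add_comm]
    have hxrt : MatRange (ptrans x) ≤ MatRange (ptrans A) := by
      refine le_trans (le_trans (psd_combo_range (sep_ptrans_posSemidef hx)
        (sep_ptrans_posSemidef hy) h1t ht1.le) (le_of_eq ?_)) hrt
      rw [← ptrans_smul_real, ← ptrans_smul_real, ← ptrans_add]
    have hyrt : MatRange (ptrans y) ≤ MatRange (ptrans A) := by
      refine le_trans (le_trans (psd_combo_range (sep_ptrans_posSemidef hy)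
        (sep_ptrans_posSemidef hx) ht1 h1t.le) (le_of_eq ?_)) hrt
      rw [add_comm, ← ptrans_smul_real, ← ptrans_smul_real, ← ptrans_add]
    exact ⟨⟨hx, sep_isPPT hx, hxr, hxrt⟩, ⟨hy, sep_isPPT hy, hyr, hyrt⟩⟩

lemma rankOne_mem_V1 (x y : Fin 3 → ℂ) : rankOne (prodVec x y) ∈ V1 :=
  ⟨1, fun _ => x, fun _ => y, by simp⟩

end Aux

/-- For separable `A`, `V₁[A] = V₁ ∩ 𝕋[A]` iff `P[A] = Q[A]`. -/
theorem stmt3 (A : M9) (hA : IsSep A) :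
    smallestFace V1 A = V1 ∩ TFace A ↔ Pvecs A = Qvecs A := by
  constructor
  · intro h
    ext z
    constructor
    · rintro ⟨⟨x, y, rfl⟩, hmem⟩
      rw [h] at hmem
      obtain ⟨hV1, hPPT, hr, hrt⟩ := hmem
      refine ⟨x, y, rfl, hr (mem_matRange_rankOne _), hrt ?_⟩
      rw [ptrans_rankOne]
      exact mem_matRange_rankOne _
    · rintro ⟨x, y, rfl, h1, h2⟩
      refine ⟨⟨x, y, rfl⟩, ?_⟩
      rw [h]
      refine ⟨rankOne_mem_V1 x y, ⟨rankOne_posSemidef _, ?_⟩, matRange_rankOne_le h1, ?_⟩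
      · rw [ptrans_rankOne]
        exact rankOne_posSemidef _
      · rw [ptrans_rankOne]
        exact matRange_rankOne_le h2
  · intro hPQ
    apply Set.Subset.antisymm
    · exact smallestFace_subset (isFaceOf_inter_TFace hA) ⟨hA, sep_isPPT hA, le_rfl, le_rfl⟩
    · rintro B ⟨hBV1, hBPPT, hBr, hBrt⟩
      obtain ⟨n, x, y, rfl⟩ := hBV1
      refine face_sum (smallestFace_isFaceOf hA) (mem_smallestFace_self A) _ fun i => ?_
      have hQ : prodVec (x i) (y i) ∈ Qvecs A := by
        refine ⟨x i, y i, rfl, ?_, ?_⟩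
        · exact hBr ((psd_sum_range (fun j => rankOne (prodVec (x j) (y j)))
            (fun j => rankOne_posSemidef _) i) (mem_matRange_rankOne _))
        · have hpt : ptrans (∑ j, rankOne (prodVec (x j) (y j)))
              = ∑ j, rankOne (prodVec (conjVec (x j)) (y j)) := by
            rw [ptrans_sum]
            exact Finset.sum_congr rfl fun j _ => ptrans_rankOne _ _
          refine hBrt ?_
          rw [hpt]
          exact (psd_sum_range _ (fun j => rankOne_posSemidef _) i) (mem_matRange_rankOne _)
      rw [← hPQ] at hQ
      exact hQ.2
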